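/- Let Λ be a finite ℤ_p-algebra, H a finite group, G = H ⋊ Γ with Γ ≅ ℤ_p generated topologically by γ, and t = γ − 1. If s ∈ Λ[[G]] is such that both the kernel and cokernel of right multiplication by s on Λ[[G]] are annihilated by powers of t, then the cokernel Λ[[G]]/Λ[[G]]s is finite. -/

import Mathlib

/-- Let `Λ` be a finite `ℤ_p`-algebra, `H` a finite group, and model
`Λ[[G]] = Λ[H][[t]]` for `G = H ⋊ Γ`, `Γ ≅ ℤ_p` topologically generated by `γ`, `t = γ - 1`.
If `s ∈ Λ[[G]]` is such that both the kernel and the cokernel of right multiplication by `s`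
on `Λ[[G]]` are annihilated by powers of `t`, then the cokernel `Λ[[G]]/Λ[[G]]s` is finite. -/
theorem coker_finite_of_t_torsion (p : ℕ) [Fact p.Prime]
    (Λ : Type) [Ring Λ] [Finite Λ] [Algebra ℤ_[p] Λ]
    (H : Type) [Group H] [Finite H]
    (s : PowerSeries (MonoidAlgebra Λ H))
    (hker : ∃ k : ℕ, ∀ r : PowerSeries (MonoidAlgebra Λ H),
        r * s = 0 → (PowerSeries.X : PowerSeries (MonoidAlgebra Λ H)) ^ k * r = 0)
    (hcoker : ∃ k : ℕ, ∀ r : PowerSeries (MonoidAlgebra Λ H),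
        (PowerSeries.X : PowerSeries (MonoidAlgebra Λ H)) ^ k * r ∈
          (Ideal.span {s} : Ideal (PowerSeries (MonoidAlgebra Λ H)))) :
    Finite (PowerSeries (MonoidAlgebra Λ H) ⧸
      (Ideal.span {s} : Ideal (PowerSeries (MonoidAlgebra Λ H)))) := by
  obtain ⟨k, hk⟩ := hcoker
  let R := MonoidAlgebra Λ H
  let I : Ideal (PowerSeries R) := Ideal.span {s}
  show Finite (PowerSeries R ⧸ I)
  have hR : Finite R := Finite.of_equiv (H → Λ) ((Finsupp.equivFunOnFinite (α := H) (M := Λ)).symm.trans MonoidAlgebra.coeffEquiv.symm)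
  let f : (Fin k → R) → PowerSeries R ⧸ I := fun c =>
    Submodule.Quotient.mk (∑ i : Fin k, PowerSeries.C (c i) * PowerSeries.X ^ (i : ℕ))
  have hsurj : Function.Surjective f := by
    intro q
    obtain ⟨g, rfl⟩ := Submodule.Quotient.mk_surjective I q
    refine ⟨fun i => PowerSeries.coeff i g, ?_⟩
    have hdvd : (PowerSeries.X : PowerSeries R) ^ k ∣
        g - ∑ i : Fin k, PowerSeries.C (PowerSeries.coeff i g) * PowerSeries.X ^ (i : ℕ) := by
      rw [PowerSeries.X_pow_dvd_iff]
      intro m hm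
      simp only [map_sub, map_sum, PowerSeries.coeff_C_mul, PowerSeries.coeff_X_pow]
      rw [Finset.sum_eq_single (⟨m, hm⟩ : Fin k)]
      · simp
      · intro b _ hb
        simp [Fin.ext_iff] at hb ⊢
        intro h; exact absurd h.symm hb
      · simp
    obtain ⟨c, hc⟩ := hdvd
    have hmem : g - ∑ i : Fin k, PowerSeries.C (PowerSeries.coeff i g) * PowerSeries.X ^ (i : ℕ) ∈ I := by
      rw [hc]; exact hk c
    show Submodule.Quotient.mk _ = Submodule.Quotient.mk g
    exact ((Submodule.Quotient.eq I).mpr hmem).symm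
  exact Finite.of_surjective f hsurj
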